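/- A graph G satisfies χ_c(G) ≤ 3 if and only if χ_c(S(G)) ≤ 3. -/

import Mathlib

/-- A signed graph: two symmetric edge relations (positive and negative edges).
Parallel edges of different signs (digons) and negative loops are representable;
positive loops are disallowed (graphs in the paper have no loops unless specified,
loops occurring in circular cliques are always negative). -/
structure SGraph (V : Type) where
  pos : V → V → Prop
  neg : V → V → Prop
  pos_symm : ∀ u v, pos u v → pos v u
  neg_symm : ∀ u v, neg u v → neg v u
  pos_irrefl : ∀ v, ¬ pos v v

namespace SGraph

variable {V W : Type}

/-- An edge-sign preserving homomorphism: preserves adjacency and edge signs. -/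
def IsSpHom (G : SGraph V) (H : SGraph W) (f : V → W) : Prop :=
  (∀ u v, G.pos u v → H.pos (f u) (f v)) ∧ (∀ u v, G.neg u v → H.neg (f u) (f v))

/-- The signed graph obtained from `G` by switching at the set of vertices where `s` is `true`:
the sign of an edge is flipped exactly when its endpoints get different values of `s`. -/
def switch (G : SGraph V) (s : V → Bool) : SGraph V where
  pos u v := (s u = s v ∧ G.pos u v) ∨ (s u ≠ s v ∧ G.neg u v)
  neg u v := (s u = s v ∧ G.neg u v) ∨ (s u ≠ s v ∧ G.pos u v)
  pos_symm := by
    rintro u v (⟨h, hp⟩ | ⟨h, hn⟩)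
    · exact Or.inl ⟨h.symm, G.pos_symm u v hp⟩
    · exact Or.inr ⟨fun e => h e.symm, G.neg_symm u v hn⟩
  neg_symm := by
    rintro u v (⟨h, hn⟩ | ⟨h, hp⟩)
    · exact Or.inl ⟨h.symm, G.neg_symm u v hn⟩
    · exact Or.inr ⟨fun e => h e.symm, G.pos_symm u v hp⟩
  pos_irrefl := by
    rintro v (⟨_, hp⟩ | ⟨h, _⟩)
    · exact G.pos_irrefl v hp
    · exact h rfl

/-- A switching homomorphism: an edge-sign preserving homomorphism after switching
at a suitable set of vertices of the source (equivalently, a vertex map preserving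
adjacency and the signs of closed walks). -/
def SwHom (G : SGraph V) (H : SGraph W) : Prop :=
  ∃ (s : V → Bool) (f : V → W), (G.switch s).IsSpHom H f

/-- The underlying graph of the signed graph is bipartite. -/
def Bipartite (G : SGraph V) : Prop :=
  ∃ c : V → Bool, ∀ u v, G.pos u v ∨ G.neg u v → c u ≠ c v

end SGraph

/-- `x` reduced modulo `r` into `[0, r)` (for `r > 0`). -/
noncomputable def rmod (x r : ℝ) : ℝ := x - r * ⌊x / r⌋

/-- The circular distance between the points `x` and `y` of the circle of
circumference `r` (the length of the shorter arc joining them). -/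
noncomputable def cdist (r x y : ℝ) : ℝ := min (rmod (x - y) r) (rmod (y - x) r)

namespace SGraph

variable {V : Type}

/-- A circular `r`-coloring of a signed graph: vertices get points of a circle of
circumference `r` such that the endpoints of each positive edge are at circular
distance at least `1`, and each endpoint of a negative edge is at circular distance
at least `1` from the antipode of the other endpoint (equivalently, the endpoints of
a negative edge are at circular distance at most `r/2 - 1`). -/
def IsCircColoring (G : SGraph V) (r : ℝ) (φ : V → ℝ) : Prop :=
  (∀ u v, G.pos u v → 1 ≤ cdist r (φ u) (φ v)) ∧
  (∀ u v, G.neg u v → 1 ≤ cdist r (φ u) (φ v + r / 2))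

/-- The circular chromatic number of a signed graph. -/
noncomputable def circChrom (G : SGraph V) : ℝ :=
  sInf {r : ℝ | 1 ≤ r ∧ ∃ φ : V → ℝ, G.IsCircColoring r φ}

end SGraph

/-- Positive edges of `S(G)`: for each edge `ab` of `G` there are two new vertices
`Sum.inr (a, b)` and `Sum.inr (b, a)`, each joined to both `a` and `b`;
`WellOrderingRel` breaks the symmetry so that each of the resulting 4-cycles
carries exactly one negative edge (hence is a negative 4-cycle). -/
def SConstPos {V : Type} (G : SimpleGraph V) (x y : V ⊕ V × V) : Prop :=
  ∃ w a b : V, G.Adj a b ∧ (w = a ∨ (w = b ∧ ¬ WellOrderingRel a b)) ∧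
    ((x = Sum.inl w ∧ y = Sum.inr (a, b)) ∨ (y = Sum.inl w ∧ x = Sum.inr (a, b)))

/-- Negative edges of `S(G)`. -/
def SConstNeg {V : Type} (G : SimpleGraph V) (x y : V ⊕ V × V) : Prop :=
  ∃ w a b : V, G.Adj a b ∧ w = b ∧ WellOrderingRel a b ∧
    ((x = Sum.inl w ∧ y = Sum.inr (a, b)) ∨ (y = Sum.inl w ∧ x = Sum.inr (a, b)))

/-- The construction `S(G)`: the signed bipartite graph obtained from `G` by replacing
every edge of `G` by a negative 4-cycle through two new vertices. -/
def SConst {V : Type} (G : SimpleGraph V) : SGraph (V ⊕ V × V) where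
  pos := SConstPos G
  neg := SConstNeg G
  pos_symm := by
    rintro x y ⟨w, a, b, hab, hw, (⟨h1, h2⟩ | ⟨h1, h2⟩)⟩
    · exact ⟨w, a, b, hab, hw, Or.inr ⟨h1, h2⟩⟩
    · exact ⟨w, a, b, hab, hw, Or.inl ⟨h1, h2⟩⟩
  neg_symm := by
    rintro x y ⟨w, a, b, hab, hw, hr, (⟨h1, h2⟩ | ⟨h1, h2⟩)⟩
    · exact ⟨w, a, b, hab, hw, hr, Or.inr ⟨h1, h2⟩⟩
    · exact ⟨w, a, b, hab, hw, hr, Or.inl ⟨h1, h2⟩⟩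
  pos_irrefl := by
    rintro v ⟨w, a, b, _, _, (⟨h1, h2⟩ | ⟨h1, h2⟩)⟩ <;> (subst h1; simp at h2)

/-- An ordinary graph viewed as a signed graph all of whose edges are positive;
its circular chromatic number is the usual circular chromatic number of the graph. -/
def toPos {V : Type} (G : SimpleGraph V) : SGraph V where
  pos u v := G.Adj u v
  neg _ _ := False
  pos_symm := fun _ _ h => h.symm
  neg_symm := fun _ _ h => h.elim
  pos_irrefl := fun v h => G.loopless.irrefl v h

/-! ### Auxiliary lemmas for the proof -/

lemma rmod_nonneg {p : ℝ} (hp : 0 < p) (x : ℝ) : 0 ≤ rmod x p := by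
  have h := Int.floor_le (x / p)
  have := (mul_le_mul_of_nonneg_left h hp.le)
  rw [mul_div_cancel₀ _ hp.ne'] at this
  simpa [rmod] using this

lemma rmod_lt {p : ℝ} (hp : 0 < p) (x : ℝ) : rmod x p < p := by
  have h := Int.lt_floor_add_one (x / p)
  have := (mul_lt_mul_of_pos_left h hp)
  rw [mul_add, mul_one, mul_div_cancel₀ _ hp.ne'] at this
  simp only [rmod]
  linarith

lemma rmod_eq_of {p x : ℝ} (h0 : 0 ≤ x) (h1 : x < p) : rmod x p = x := by
  have hp : 0 < p := lt_of_le_of_lt h0 h1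
  have : ⌊x / p⌋ = 0 := by
    rw [Int.floor_eq_zero_iff]
    constructor
    · positivity
    · rw [div_lt_one hp]; exact h1
  simp [rmod, this]

lemma rmod_add_int {p : ℝ} (hp : p ≠ 0) (x : ℝ) (k : ℤ) :
    rmod (x + p * k) p = rmod x p := by
  have : (x + p * k) / p = x / p + k := by
    field_simp
  simp only [rmod, this, Int.floor_add_intCast]
  push_cast
  ring

lemma rmod_sub_period {p : ℝ} (hp : p ≠ 0) (x : ℝ) : rmod (x - p) p = rmod x p := by
  simpa [sub_eq_add_neg] using rmod_add_int hp x (-1)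

lemma rmod_decomp (x p : ℝ) : x = rmod x p + p * ⌊x / p⌋ := by
  simp [rmod]

lemma rmod_congr' {p : ℝ} (hp : p ≠ 0) {x y : ℝ} (k : ℤ) (h : x = y + p * (k : ℝ)) :
    rmod x p = rmod y p := by rw [h, rmod_add_int hp]

lemma cdist_eq {p : ℝ} (hp : 0 < p) (x y : ℝ) :
    cdist p x y = min (rmod (x - y) p) (p - rmod (x - y) p) := by
  set t := rmod (x - y) p with ht
  have hk : y - x = (p - t) + p * (-⌊(x - y) / p⌋ - 1 : ℤ) := by
    have := rmod_decomp (x - y) p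
    push_cast
    linarith
  rcases eq_or_lt_of_le (rmod_nonneg hp (x - y)) with h0 | h0
  · have hyx : y - x = 0 + p * (-⌊(x - y) / p⌋ : ℤ) := by
      have := rmod_decomp (x - y) p
      push_cast
      linarith [h0.symm]
    have : rmod (y - x) p = 0 := by
      rw [rmod_congr' hp.ne' _ hyx, rmod_eq_of le_rfl hp]
    rw [cdist, this, ← ht]
    have ht0 : t = 0 := h0.symm
    rw [ht0]
    simp [min_eq_left hp.le]
  · have h1 : rmod (y - x) p = p - t := by
      rw [rmod_congr' hp.ne' _ hk, rmod_eq_of (by linarith [rmod_lt hp (x - y)]) (by linarith)]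
    rw [cdist, h1, ← ht]

lemma cdist_symm (p x y : ℝ) : cdist p x y = cdist p y x := by
  simp [cdist, min_comm]

lemma one_le_cdist {p x y D : ℝ} (hp : 0 < p) (hD : x - y = D) (h1 : 1 ≤ D) (h2 : D ≤ p - 1) :
    1 ≤ cdist p x y := by
  rw [cdist_eq hp, hD, rmod_eq_of (by linarith) (by linarith)]
  exact le_min h1 (by linarith)

lemma one_le_cdist' {p x y D : ℝ} (hp : 0 < p) (hD : x - y = D - p) (h1 : 1 ≤ D) (h2 : D ≤ p - 1) :
    1 ≤ cdist p x y := by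
  rw [cdist_eq hp, hD, rmod_sub_period hp.ne', rmod_eq_of (by linarith) (by linarith)]
  exact le_min h1 (by linarith)

lemma cdist_le_left {p x y D : ℝ} (hp : 0 < p) (hD : x - y = D) (h0 : 0 ≤ D) (h1 : D < p) :
    cdist p x y ≤ D := by
  rw [cdist_eq hp, hD, rmod_eq_of h0 h1]
  exact min_le_left _ _

lemma cdist_le_right {p x y D : ℝ} (hp : 0 < p) (hD : x - y = D) (h0 : 0 ≤ D) (h1 : D < p) :
    cdist p x y ≤ p - D := by
  rw [cdist_eq hp, hD, rmod_eq_of h0 h1]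
  exact min_le_right _ _

lemma cdist_antipode {p : ℝ} (hp : 0 < p) (x y : ℝ) :
    cdist p x (y + p / 2) = p / 2 - cdist p x y := by
  have hne := hp.ne'
  set t := rmod (x - y) p with ht
  have h0 : 0 ≤ t := rmod_nonneg hp _
  have h1 : t < p := rmod_lt hp _
  have hd := rmod_decomp (x - y) p
  rw [cdist_eq hp x y, cdist_eq hp x (y + p / 2), ← ht]
  rcases lt_or_ge t (p / 2) with hc | hc
  · rw [rmod_congr' hne (⌊(x - y) / p⌋ - 1)
      (by push_cast; linarith : x - (y + p / 2) = (t + p / 2) + p * ((⌊(x - y) / p⌋ - 1 : ℤ) : ℝ)),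
      rmod_eq_of (by linarith) (by linarith)]
    rcases le_or_gt t (p - t) with h | h
    · rw [min_eq_left h]
      have : min (t + p / 2) (p - (t + p / 2)) = p / 2 - t := by
        rw [min_eq_right (by linarith)]; ring
      rw [this]
    · exfalso; linarith
  · rw [rmod_congr' hne (⌊(x - y) / p⌋)
      (by linarith : x - (y + p / 2) = (t - p / 2) + p * ((⌊(x - y) / p⌋ : ℤ) : ℝ)),
      rmod_eq_of (by linarith) (by linarith)]
    have hmin : min t (p - t) = p - t := min_eq_right (by linarith)
    rw [hmin]
    have : min (t - p / 2) (p - (t - p / 2)) = t - p / 2 := min_eq_left (by linarith)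
    rw [this]; ring

lemma cdist_anti {p : ℝ} (hp : 0 < p) (x y z : ℝ) :
    cdist p x y + cdist p y z + cdist p z x ≤ p := by
  have hne := hp.ne'
  set a := rmod (x - y) p with ha
  set b := rmod (y - z) p with hb
  have ha0 : 0 ≤ a := rmod_nonneg hp _
  have ha1 : a < p := rmod_lt hp _
  have hb0 : 0 ≤ b := rmod_nonneg hp _
  have hb1 : b < p := rmod_lt hp _
  have hda := rmod_decomp (x - y) p
  have hdb := rmod_decomp (y - z) p
  rw [cdist_eq hp x y, cdist_eq hp y z, cdist_eq hp z x, ← ha, ← hb]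
  have hz : min (0:ℝ) (p - 0) = 0 := by
    rw [sub_zero]; exact min_eq_left hp.le
  rcases lt_or_ge (a + b) p with hab | hab
  · rcases eq_or_lt_of_le (by linarith : (0:ℝ) ≤ a + b) with h0ab | h0ab
    · have he : z - x = (0 : ℝ) + p * (-⌊(x - y) / p⌋ - ⌊(y - z) / p⌋ : ℤ) := by
        push_cast; linarith
      rw [rmod_congr' hne _ he, rmod_eq_of le_rfl hp, hz]
      have := min_le_left a (p - a)
      have := min_le_left b (p - b)
      linarith
    · have he : z - x = (p - (a + b)) + p * (-⌊(x - y) / p⌋ - ⌊(y - z) / p⌋ - 1 : ℤ) := by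
        push_cast; linarith
      rw [rmod_congr' hne _ he, rmod_eq_of (by linarith) (by linarith)]
      have := min_le_left a (p - a)
      have := min_le_left b (p - b)
      have := min_le_left (p - (a + b)) (p - (p - (a + b)))
      linarith
  · rcases eq_or_lt_of_le hab with h0ab | h0ab
    · have he : z - x = (0 : ℝ) + p * (-⌊(x - y) / p⌋ - ⌊(y - z) / p⌋ - 1 : ℤ) := by
        push_cast; linarith
      rw [rmod_congr' hne _ he, rmod_eq_of le_rfl hp, hz]
      have := min_le_left a (p - a)
      have := min_le_left b (p - b)
      linarith
    · have he : z - x = (2 * p - (a + b)) + p * (-⌊(x - y) / p⌋ - ⌊(y - z) / p⌋ - 2 : ℤ) := by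
        push_cast; linarith
      rw [rmod_congr' hne _ he, rmod_eq_of (by linarith) (by linarith)]
      have := min_le_right a (p - a)
      have := min_le_right b (p - b)
      have := min_le_right (2 * p - (a + b)) (p - (2 * p - (a + b)))
      linarith

lemma cdist_double {p x y : ℝ} (hp : 0 < p) (hp4 : p < 4)
    (h1 : 2 - p / 2 ≤ cdist p x y) (h2 : cdist p x y ≤ p - 2) :
    4 - p ≤ cdist p (2 * x) (2 * y) := by
  have hne := hp.ne'
  set t := rmod (x - y) p with ht
  have h0 : 0 ≤ t := rmod_nonneg hp _
  have hlt : t < p := rmod_lt hp _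
  have hd := rmod_decomp (x - y) p
  rw [cdist_eq hp x y, ← ht] at h1 h2
  rw [cdist_eq hp (2 * x) (2 * y)]
  rcases le_total t (p - t) with hc | hc
  · rw [min_eq_left hc] at h1 h2
    have he : 2 * x - 2 * y = (2 * t) + p * (2 * ⌊(x - y) / p⌋ : ℤ) := by
      push_cast; linarith
    rw [rmod_congr' hne _ he, rmod_eq_of (by linarith) (by linarith)]
    exact le_min (by linarith) (by linarith)
  · rw [min_eq_right hc] at h1 h2
    have he : 2 * x - 2 * y = (2 * t - p) + p * (2 * ⌊(x - y) / p⌋ + 1 : ℤ) := by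
      push_cast; linarith
    rw [rmod_congr' hne _ he, rmod_eq_of (by linarith) (by linarith)]
    exact le_min (by linarith) (by linarith)

lemma rmod_scale {p x c : ℝ} (hc : 0 < c) : rmod (c * x) (c * p) = c * rmod x p := by
  unfold rmod
  rw [mul_div_mul_left _ _ hc.ne']
  ring

lemma cdist_scale {p x y c : ℝ} (hc : 0 < c) :
    cdist (c * p) (c * x) (c * y) = c * cdist p x y := by
  unfold cdist
  rw [show c * x - c * y = c * (x - y) by ring, show c * y - c * x = c * (y - x) by ring,
    rmod_scale hc, rmod_scale hc]
  rcases le_total (rmod (x - y) p) (rmod (y - x) p) with h | h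
  · rw [min_eq_left h, min_eq_left (by nlinarith)]
  · rw [min_eq_right h, min_eq_right (by nlinarith)]

lemma exists_circColoring {U : Type} [Fintype U] (H : SGraph U) :
    ∃ r : ℝ, 1 ≤ r ∧ ∃ φ : U → ℝ, H.IsCircColoring r φ := by
  classical
  set n := Fintype.card U with hn
  set r : ℝ := 2 * n + 2 with hr
  have hr0 : (0:ℝ) < r := by
    rw [hr]; positivity
  have hι := Fintype.equivFin U
  set ι : U → ℝ := fun u => ((hι u : ℕ) : ℝ) with hιdef
  have hb : ∀ w : U, 0 ≤ ι w ∧ ι w ≤ (n : ℝ) - 1 := by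
    intro w
    refine ⟨Nat.cast_nonneg _, ?_⟩
    have h2 : ((hι w : ℕ) : ℝ) + 1 ≤ (n : ℝ) := by
      exact_mod_cast Nat.succ_le_of_lt (hι w).isLt
    simp only [hιdef]
    linarith
  refine ⟨r, by rw [hr]; have : (0:ℝ) ≤ (n:ℝ) := Nat.cast_nonneg n; linarith, ι, ?_, ?_⟩
  · intro u v h
    have huv : u ≠ v := fun e => H.pos_irrefl v (e ▸ h)
    have hij : (hι u : ℕ) ≠ (hι v : ℕ) := by
      intro e
      exact huv (hι.injective (Fin.val_injective e))
    obtain ⟨h0u, h1u⟩ := hb u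
    obtain ⟨h0v, h1v⟩ := hb v
    rcases hij.lt_or_gt with hlt | hlt
    · rw [cdist_symm]
      have h1 : (1:ℝ) ≤ ι v - ι u := by
        have : ((hι u : ℕ) : ℝ) + 1 ≤ ((hι v : ℕ) : ℝ) := by
          exact_mod_cast Nat.succ_le_of_lt hlt
        simp only [hιdef]; linarith
      exact one_le_cdist hr0 rfl h1 (by rw [hr]; linarith)
    · have h1 : (1:ℝ) ≤ ι u - ι v := by
        have : ((hι v : ℕ) : ℝ) + 1 ≤ ((hι u : ℕ) : ℝ) := by
          exact_mod_cast Nat.succ_le_of_lt hlt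
        simp only [hιdef]; linarith
      exact one_le_cdist hr0 rfl h1 (by rw [hr]; linarith)
  · intro u v h
    obtain ⟨h0u, h1u⟩ := hb u
    obtain ⟨h0v, h1v⟩ := hb v
    refine one_le_cdist' hr0
      (show ι u - (ι v + r / 2) = (ι u - ι v + ((n:ℝ) + 1)) - r by rw [hr]; ring)
      (by linarith) (by rw [hr]; linarith)

set_option maxHeartbeats 1000000 in
lemma forward_mem {V : Type} {G : SimpleGraph V} {r : ℝ} (hE : ∃ a b, G.Adj a b)
    (hr1 : 1 ≤ r) (hcol : ∃ φ : V → ℝ, (toPos G).IsCircColoring r φ) :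
    1 ≤ 4 * r / (r + 1) ∧
      ∃ ψ : (V ⊕ V × V) → ℝ, (SConst G).IsCircColoring (4 * r / (r + 1)) ψ := by
  classical
  obtain ⟨φ, hφ⟩ := hcol
  obtain ⟨a₀, b₀, hab₀⟩ := hE
  have hr0 : (0:ℝ) < r := lt_of_lt_of_le one_pos hr1
  have hrp : (0:ℝ) < r + 1 := by linarith
  -- distances between reduced colors of adjacent vertices
  set t : V → ℝ := fun v => rmod (φ v) r with htdef
  have key : ∀ u v : V, G.Adj u v →
      (1 ≤ t u - t v ∧ t u - t v ≤ r - 1) ∨ (1 ≤ t v - t u ∧ t v - t u ≤ r - 1) := by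
    intro u v hadj
    have h := hφ.1 u v hadj
    rw [cdist_eq hr0] at h
    rw [le_min_iff] at h
    obtain ⟨hs1, hs2⟩ := h
    have hdu := rmod_decomp (φ u) r
    have hdv := rmod_decomp (φ v) r
    have htu0 : 0 ≤ t u := rmod_nonneg hr0 _
    have htu1 : t u < r := rmod_lt hr0 _
    have htv0 : 0 ≤ t v := rmod_nonneg hr0 _
    have htv1 : t v < r := rmod_lt hr0 _
    rcases le_or_gt (t v) (t u) with hc | hc
    · have he : φ u - φ v = (t u - t v) + r * (⌊φ u / r⌋ - ⌊φ v / r⌋ : ℤ) := by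
        push_cast; simp only [htdef]; linarith
      rw [rmod_congr' hr0.ne' _ he, rmod_eq_of (by linarith) (by linarith)] at hs1 hs2
      exact Or.inl ⟨hs1, by linarith⟩
    · have he : φ u - φ v = (t u - t v + r) + r * (⌊φ u / r⌋ - ⌊φ v / r⌋ - 1 : ℤ) := by
        push_cast; simp only [htdef]; linarith
      rw [rmod_congr' hr0.ne' _ he, rmod_eq_of (by linarith) (by linarith)] at hs1 hs2
      exact Or.inr ⟨by linarith, by linarith⟩
  have hr2 : 2 ≤ r := by
    rcases key a₀ b₀ hab₀ with ⟨h1, h2⟩ | ⟨h1, h2⟩ <;> linarith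
  set p : ℝ := 4 * r / (r + 1) with hpdef
  have hpval : p * (r + 1) = 4 * r := by
    rw [hpdef]; field_simp
  have hp83 : 8 / 3 ≤ p := by nlinarith
  have hp4 : p < 4 := by nlinarith
  have hp0 : (0:ℝ) < p := by nlinarith
  set α : ℝ := 2 / (r + 1) with hαdef
  have hα0 : (0:ℝ) < α := by positivity
  have hαl : α = 2 - p / 2 := by
    rw [hαdef]; rw [eq_sub_iff_add_eq]; field_simp; linarith
  have hαu : α * (r - 1) = p - 2 := by
    rw [hαdef]; field_simp; linarith
  set x : V → ℝ := fun v => α * t v with hxdef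
  -- distance bounds for adjacent pairs, scaled
  have hd : ∀ u v : V, G.Adj u v →
      (2 - p / 2 ≤ x u - x v ∧ x u - x v ≤ p - 2) ∨
      (2 - p / 2 ≤ x v - x u ∧ x v - x u ≤ p - 2) := by
    intro u v hadj
    rcases key u v hadj with ⟨h1, h2⟩ | ⟨h1, h2⟩
    · left
      constructor
      · rw [← hαl]
        have : α * 1 ≤ α * (t u - t v) := by nlinarith
        simp only [hxdef]; nlinarith
      · rw [← hαu]
        simp only [hxdef]; nlinarith
    · right
      constructor
      · rw [← hαl]
        simp only [hxdef]; nlinarith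
      · rw [← hαu]
        simp only [hxdef]; nlinarith
  refine ⟨by linarith, ?_⟩
  refine ⟨fun w => match w with
    | Sum.inl v => x v
    | Sum.inr (a, b) => (x a + x b) / 2 +
        (if WellOrderingRel a b then (if x a ≤ x b then p / 4 else 3 * p / 4) else p / 2),
    ?_, ?_⟩
  · -- positive edges
    rintro u v ⟨w, a, b, hadj, hw, (⟨rfl, rfl⟩ | ⟨rfl, rfl⟩)⟩ <;>
    · dsimp only
      rcases hw with h | ⟨h, hnW⟩
      · -- w = a
        rw [h]
        by_cases hW : WellOrderingRel a b
        · rw [if_pos hW]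
          rcases hd a b hadj with ⟨g1, g2⟩ | ⟨g1, g2⟩
          · rw [if_neg (by linarith : ¬ x a ≤ x b)]
            first
            | exact one_le_cdist hp0
                (show (x a + x b) / 2 + 3 * p / 4 - x a = 3 * p / 4 - (x a - x b) / 2 by ring)
                (by linarith) (by linarith)
            | · rw [cdist_symm]
                exact one_le_cdist hp0
                  (show (x a + x b) / 2 + 3 * p / 4 - x a = 3 * p / 4 - (x a - x b) / 2 by ring)
                  (by linarith) (by linarith)
          · rw [if_pos (by linarith : x a ≤ x b)]
            first
            | exact one_le_cdist hp0
                (show (x a + x b) / 2 + p / 4 - x a = (x b - x a) / 2 + p / 4 by ring)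
                (by linarith) (by linarith)
            | · rw [cdist_symm]
                exact one_le_cdist hp0
                  (show (x a + x b) / 2 + p / 4 - x a = (x b - x a) / 2 + p / 4 by ring)
                  (by linarith) (by linarith)
        · rw [if_neg hW]
          rcases hd a b hadj with ⟨g1, g2⟩ | ⟨g1, g2⟩
          · first
            | exact one_le_cdist hp0
                (show (x a + x b) / 2 + p / 2 - x a = p / 2 - (x a - x b) / 2 by ring)
                (by linarith) (by linarith)
            | · rw [cdist_symm]
                exact one_le_cdist hp0
                  (show (x a + x b) / 2 + p / 2 - x a = p / 2 - (x a - x b) / 2 by ring)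
                  (by linarith) (by linarith)
          · first
            | exact one_le_cdist hp0
                (show (x a + x b) / 2 + p / 2 - x a = (x b - x a) / 2 + p / 2 by ring)
                (by linarith) (by linarith)
            | · rw [cdist_symm]
                exact one_le_cdist hp0
                  (show (x a + x b) / 2 + p / 2 - x a = (x b - x a) / 2 + p / 2 by ring)
                  (by linarith) (by linarith)
      · -- w = b, ¬ WOR a b
        rw [h, if_neg hnW]
        rcases hd a b hadj with ⟨g1, g2⟩ | ⟨g1, g2⟩
        · first
          | exact one_le_cdist hp0
              (show (x a + x b) / 2 + p / 2 - x b = (x a - x b) / 2 + p / 2 by ring)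
              (by linarith) (by linarith)
          | · rw [cdist_symm]
              exact one_le_cdist hp0
                (show (x a + x b) / 2 + p / 2 - x b = (x a - x b) / 2 + p / 2 by ring)
                (by linarith) (by linarith)
        · first
          | exact one_le_cdist hp0
              (show (x a + x b) / 2 + p / 2 - x b = p / 2 - (x b - x a) / 2 by ring)
              (by linarith) (by linarith)
          | · rw [cdist_symm]
              exact one_le_cdist hp0
                (show (x a + x b) / 2 + p / 2 - x b = p / 2 - (x b - x a) / 2 by ring)
                (by linarith) (by linarith)
  · -- negative edges
    rintro u v ⟨w, a, b, hadj, h, hW, (⟨rfl, rfl⟩ | ⟨rfl, rfl⟩)⟩ <;>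
    · dsimp only
      rw [h, if_pos hW]
      have hclaim : cdist p ((x a + x b) / 2 +
          (if x a ≤ x b then p / 4 else 3 * p / 4)) (x b) ≤ p / 2 - 1 := by
        rcases hd a b hadj with ⟨g1, g2⟩ | ⟨g1, g2⟩
        · rw [if_neg (by linarith : ¬ x a ≤ x b)]
          have := cdist_le_right hp0
            (show (x a + x b) / 2 + 3 * p / 4 - x b = (x a - x b) / 2 + 3 * p / 4 by ring)
            (by linarith) (by linarith)
          linarith
        · rw [if_pos (by linarith : x a ≤ x b)]
          have := cdist_le_left hp0
            (show (x a + x b) / 2 + p / 4 - x b = p / 4 - (x b - x a) / 2 by ring)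
            (by linarith) (by linarith)
          linarith
      first
      | · rw [cdist_antipode hp0]
          linarith
      | · rw [cdist_antipode hp0, cdist_symm]
          linarith

set_option maxHeartbeats 1000000 in
lemma backward_mem {V : Type} {G : SimpleGraph V} {p : ℝ} (hE : ∃ a b, G.Adj a b)
    (hp4 : p < 4) (hp1 : 1 ≤ p)
    (hcol : ∃ ψ : (V ⊕ V × V) → ℝ, (SConst G).IsCircColoring p ψ) :
    8 / 3 ≤ p ∧ 1 ≤ p / (4 - p) ∧ ∃ φ : V → ℝ, (toPos G).IsCircColoring (p / (4 - p)) φ := by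
  classical
  obtain ⟨ψ, hψ⟩ := hcol
  obtain ⟨a₀, b₀, hab₀⟩ := hE
  have hp0 : (0:ℝ) < p := lt_of_lt_of_le one_pos hp1
  have claimW : ∀ a b : V, G.Adj a b → WellOrderingRel a b →
      2 - p / 2 ≤ cdist p (ψ (Sum.inl a)) (ψ (Sum.inl b)) ∧
      cdist p (ψ (Sum.inl a)) (ψ (Sum.inl b)) ≤ p - 2 := by
    intro a b hadj hW
    have hnW : ¬ WellOrderingRel b a := asymm hW
    have h1 : 1 ≤ cdist p (ψ (Sum.inl a)) (ψ (Sum.inr (a, b))) :=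
      hψ.1 _ _ ⟨a, a, b, hadj, Or.inl rfl, Or.inl ⟨rfl, rfl⟩⟩
    have h2 : 1 ≤ cdist p (ψ (Sum.inr (a, b))) (ψ (Sum.inl b) + p / 2) :=
      hψ.2 _ _ ⟨b, a, b, hadj, rfl, hW, Or.inr ⟨rfl, rfl⟩⟩
    have h3 : 1 ≤ cdist p (ψ (Sum.inl b)) (ψ (Sum.inr (b, a))) :=
      hψ.1 _ _ ⟨b, b, a, hadj.symm, Or.inl rfl, Or.inl ⟨rfl, rfl⟩⟩
    have h4 : 1 ≤ cdist p (ψ (Sum.inl a)) (ψ (Sum.inr (b, a))) :=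
      hψ.1 _ _ ⟨a, b, a, hadj.symm, Or.inr ⟨rfl, hnW⟩, Or.inl ⟨rfl, rfl⟩⟩
    constructor
    · -- lower bound via the negative 4-cycle vertex (a, b)
      have ht := cdist_anti hp0 (ψ (Sum.inl a)) (ψ (Sum.inl b) + p / 2) (ψ (Sum.inr (a, b)))
      rw [cdist_symm p (ψ (Sum.inl b) + p / 2) (ψ (Sum.inr (a, b)))] at ht
      rw [cdist_symm p (ψ (Sum.inr (a, b))) (ψ (Sum.inl a))] at ht
      have hup : cdist p (ψ (Sum.inl a)) (ψ (Sum.inl b) + p / 2) ≤ p - 2 := by linarith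
      rw [cdist_antipode hp0] at hup
      linarith
    · -- upper bound via the all-positive vertex (b, a)
      have ht := cdist_anti hp0 (ψ (Sum.inl a)) (ψ (Sum.inl b)) (ψ (Sum.inr (b, a)))
      rw [cdist_symm p (ψ (Sum.inr (b, a))) (ψ (Sum.inl a))] at ht
      linarith
  have claim : ∀ a b : V, G.Adj a b →
      2 - p / 2 ≤ cdist p (ψ (Sum.inl a)) (ψ (Sum.inl b)) ∧
      cdist p (ψ (Sum.inl a)) (ψ (Sum.inl b)) ≤ p - 2 := by
    intro a b hadj
    rcases trichotomous_of WellOrderingRel a b with hW | hW | hW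
    · exact claimW a b hadj hW
    · exact absurd hW hadj.ne
    · rw [cdist_symm]
      exact claimW b a hadj.symm hW
  have hp83 : 8 / 3 ≤ p := by
    obtain ⟨hl, hu⟩ := claim a₀ b₀ hab₀
    linarith
  have h4p : (0:ℝ) < 4 - p := by linarith
  refine ⟨hp83, by rw [le_div_iff₀ h4p]; linarith, ?_⟩
  refine ⟨fun v => (1 / (4 - p)) * (2 * ψ (Sum.inl v)), ?_, ?_⟩
  · intro u v hadj
    obtain ⟨hl, hu⟩ := claim u v hadj
    have hdbl := cdist_double hp0 hp4 hl hu
    have hc : (0:ℝ) < 1 / (4 - p) := by positivity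
    rw [show p / (4 - p) = (1 / (4 - p)) * p by ring, cdist_scale hc]
    have : (1 / (4 - p)) * (4 - p) ≤ (1 / (4 - p)) * cdist p (2 * ψ (Sum.inl u)) (2 * ψ (Sum.inl v)) :=
      mul_le_mul_of_nonneg_left hdbl hc.le
    rw [one_div_mul_cancel h4p.ne'] at this
    exact this
  · intro u v hne
    exact hne.elim
/-- `χ_c(G) ≤ 3` iff `χ_c(S(G)) ≤ 3`. -/
theorem circChrom_le_three_iff {V : Type} [Fintype V] (G : SimpleGraph V) :
    (toPos G).circChrom ≤ 3 ↔ (SConst G).circChrom ≤ 3 := by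
  classical
  rw [SGraph.circChrom, SGraph.circChrom]
  set S1 : Set ℝ := {r : ℝ | 1 ≤ r ∧ ∃ φ, (toPos G).IsCircColoring r φ} with hS1
  set S2 : Set ℝ := {r : ℝ | 1 ≤ r ∧ ∃ φ, (SConst G).IsCircColoring r φ} with hS2
  have bdd1 : BddBelow S1 := ⟨1, fun x hx => hx.1⟩
  have bdd2 : BddBelow S2 := ⟨1, fun x hx => hx.1⟩
  by_cases hE : ∃ a b, G.Adj a b
  · -- G has an edge
    obtain ⟨r1, hr1a, hr1b⟩ := exists_circColoring (toPos G)
    obtain ⟨r2, hr2a, hr2b⟩ := exists_circColoring (SConst G)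
    have ne1 : S1.Nonempty := ⟨r1, hr1a, hr1b⟩
    have ne2 : S2.Nonempty := ⟨r2, hr2a, hr2b⟩
    constructor
    · intro h
      refine le_of_forall_pos_le_add ?_
      intro ε hε
      obtain ⟨r, hrS, hrlt⟩ := exists_lt_of_csInf_lt ne1
        (lt_of_le_of_lt h (by linarith : (3:ℝ) < 3 + ε))
      obtain ⟨hq1, ψ, hψ⟩ := forward_mem hE hrS.1 hrS.2
      have hmem : (4 * r / (r + 1)) ∈ S2 := ⟨hq1, ψ, hψ⟩
      have hle : sInf S2 ≤ 4 * r / (r + 1) := csInf_le bdd2 hmem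
      have hr0 : (0:ℝ) < r := lt_of_lt_of_le one_pos hrS.1
      have hbound : 4 * r / (r + 1) ≤ 3 + ε := by
        rw [div_le_iff₀ (by linarith)]
        nlinarith [mul_nonneg hε.le hr0.le]
      linarith
    · intro h
      refine le_of_forall_pos_le_add ?_
      intro ε hε
      set δ : ℝ := ε / (4 + ε) with hδ
      have hδ0 : 0 < δ := by positivity
      have hδ1 : δ < 1 := by
        rw [hδ, div_lt_one (by linarith)]; linarith
      obtain ⟨p, hpS, hplt⟩ := exists_lt_of_csInf_lt ne2
        (lt_of_le_of_lt h (by linarith : (3:ℝ) < 3 + δ))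
      have hp4 : p < 4 := by linarith
      obtain ⟨hp83, hm1, φ, hφ⟩ := backward_mem hE hp4 hpS.1 hpS.2
      have hle : sInf S1 ≤ p / (4 - p) := csInf_le bdd1 ⟨hm1, φ, hφ⟩
      have hbound : p / (4 - p) ≤ 3 + ε := by
        rw [div_le_iff₀ (by linarith)]
        have h2 : δ * (4 + ε) = ε := by
          rw [hδ, div_mul_cancel₀]; linarith
        nlinarith [mul_lt_mul_of_pos_right hplt (show (0:ℝ) < 4 + ε by linarith)]
      linarith
  · -- G has no edge
    push_neg at hE
    have h1 : (1:ℝ) ∈ S1 := by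
      refine ⟨le_rfl, fun _ => 0, fun u v h => absurd h (hE u v), fun u v h => h.elim⟩
    have h2 : (1:ℝ) ∈ S2 := by
      refine ⟨le_rfl, fun _ => 0, ?_, ?_⟩
      · rintro u v ⟨w, a, b, hadj, -, -⟩
        exact absurd hadj (hE a b)
      · rintro u v ⟨w, a, b, hadj, -, -, -⟩
        exact absurd hadj (hE a b)
    have hle1 : sInf S1 ≤ 1 := csInf_le bdd1 h1
    have hle2 : sInf S2 ≤ 1 := csInf_le bdd2 h2
    exact iff_of_true (by linarith) (by linarith)
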